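/- Let K be a field with a non-archimedean absolute value |·|, let f(z) = z^d + b_{d-1}z^{d-1} + ... + b_0 ∈ K[z] with d ≥ 2, let a ∈ K*, and define the Hénon map φ(x,y) = (ay, x + f(y)). Set C_f = max over 0 ≤ i < d of max(|b_i|^{1/(d-i)}, 1), and let B⁺ = {(x,y) ∈ K² : |y| > max(|x|^{1/d}, C_f, |a|^{1/(d-1)})}. Then B⁺ is closed under the action of φ, and for (x,y) ∈ B⁺ one has ‖φ(x,y)‖ = |y|^d, where ‖(u,v)‖ = max(|u|,|v|). -/

import Mathlib

open Polynomial Filter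

private lemma na_add_eq {K : Type*} [Field K] (v : AbsoluteValue K ℝ)
    (hna : IsNonarchimedean v) {x y : K} (h : v y < v x) : v (x + y) = v x := by
  apply le_antisymm
  · exact (hna x y).trans (by simp [le_of_lt h])
  · by_contra hlt
    push_neg at hlt
    have : v x = v ((x + y) + (-y)) := by ring_nf
    have h2 := (hna (x + y) (-y)).trans_eq (by rw [v.map_neg])
    rw [← this] at h2
    have := max_lt hlt h
    exact absurd h2 (not_le_of_gt this)

private lemma na_sum_lt {K : Type*} [Field K] (v : AbsoluteValue K ℝ)
    (hna : IsNonarchimedean v) {M : ℝ} (hM : 0 < M) (s : Finset ℕ) (g : ℕ → K)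
    (h : ∀ i ∈ s, v (g i) < M) : v (∑ i ∈ s, g i) < M := by
  induction s using Finset.induction_on with
  | empty => simpa using hM
  | insert _ _ hns ih =>
    rename_i a s
    rw [Finset.sum_insert hns]
    refine lt_of_le_of_lt (hna _ _) (max_lt (h a (by simp)) (ih fun i hi => h i (by simp [hi])))

/-- for a non-archimedean absolute value, the forward escape region
`B⁺` of a Hénon map `φ(x,y) = (ay, x + f(y))` is closed under `φ`, and on `B⁺`
one has `‖φ(x,y)‖ = |y|^d`. -/
theorem stmt0 {K : Type*} [Field K] (v : AbsoluteValue K ℝ)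
    (hna : IsNonarchimedean v) (d : ℕ) (hd : 2 ≤ d)
    (f : K[X]) (hmonic : f.Monic) (hdeg : f.natDegree = d)
    (a : K) (ha : a ≠ 0)
    (φ : K × K → K × K) (hφ : ∀ P, φ P = (a * P.2, P.1 + f.eval P.2))
    (Cf : ℝ)
    (hCf : Cf = (Finset.range d).sup' (Finset.nonempty_range_iff.mpr (by omega))
      (fun i => max ((v (f.coeff i)) ^ ((1 : ℝ) / ((d : ℝ) - (i : ℝ)))) 1))
    (Bplus : Set (K × K))
    (hB : Bplus = {P : K × K | v P.2 > max ((v P.1) ^ ((1 : ℝ) / (d : ℝ)))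
      (max Cf ((v a) ^ ((1 : ℝ) / ((d : ℝ) - 1))))}) :
    (∀ P ∈ Bplus, φ P ∈ Bplus) ∧
    (∀ P ∈ Bplus, max (v (φ P).1) (v (φ P).2) = (v P.2) ^ d) := by
  -- basic facts
  have hCf1 : 1 ≤ Cf := by
    rw [hCf]
    refine Finset.le_sup'_of_le _ (Finset.mem_range.mpr (by omega : (0:ℕ) < d)) (le_max_right _ 1)
  -- key computation for arbitrary P ∈ Bplus
  have key : ∀ P ∈ Bplus, v (a * P.2) < (v P.2) ^ d ∧ v (P.1 + f.eval P.2) = (v P.2) ^ d := by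
    intro P hP
    rw [hB] at hP
    obtain ⟨x, y⟩ := P
    simp only [Set.mem_setOf_eq, gt_iff_lt, max_lt_iff] at hP
    obtain ⟨hx', hCfy, ha'⟩ := hP
    set Y := v y with hY
    have hY1 : 1 < Y := lt_of_le_of_lt hCf1 hCfy
    have hY0 : 0 < Y := lt_trans zero_lt_one hY1
    -- v x < Y ^ d
    have hx : v x < Y ^ d := by
      have := (Real.rpow_inv_lt_iff_of_pos (v.nonneg x) (le_of_lt hY0)
        (by positivity : (0:ℝ) < (d:ℝ))).mp (by rwa [inv_eq_one_div])
      rwa [Real.rpow_natCast] at this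
    -- v a < Y ^ (d-1)
    have hva : v a < Y ^ (d - 1) := by
      have hdpos : (0:ℝ) < (d:ℝ) - 1 := by
        have : (2:ℝ) ≤ (d:ℝ) := by exact_mod_cast hd
        linarith
      have := (Real.rpow_inv_lt_iff_of_pos (v.nonneg a) (le_of_lt hY0) hdpos).mp
        (by rwa [inv_eq_one_div])
      have hcast : ((d:ℝ) - 1) = ((d - 1 : ℕ) : ℝ) := by
        have : (1:ℕ) ≤ d := by omega
        push_cast [this]; ring
      rwa [hcast, Real.rpow_natCast] at this
    -- coefficients
    have hb : ∀ i < d, v (f.coeff i) < Y ^ (d - i) := by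
      intro i hi
      have hle : (v (f.coeff i)) ^ ((1 : ℝ) / ((d : ℝ) - (i : ℝ))) ≤ Cf := by
        rw [hCf]
        exact Finset.le_sup'_of_le _ (Finset.mem_range.mpr hi) (le_max_left _ 1)
      have hlt := lt_of_le_of_lt hle hCfy
      have hdipos : (0:ℝ) < (d:ℝ) - (i:ℝ) := by
        have : (i:ℝ) < (d:ℝ) := by exact_mod_cast hi
        linarith
      have := (Real.rpow_inv_lt_iff_of_pos (v.nonneg _) (le_of_lt hY0) hdipos).mp
        (by rwa [inv_eq_one_div])
      have hcast : ((d:ℝ) - (i:ℝ)) = ((d - i : ℕ) : ℝ) := by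
        have : i ≤ d := le_of_lt hi
        push_cast [this]; ring
      rwa [hcast, Real.rpow_natCast] at this
    have hYd0 : (0:ℝ) < Y ^ d := pow_pos hY0 d
    -- v (a*y) < Y^d
    have hay : v (a * y) < Y ^ d := by
      rw [v.map_mul]
      calc v a * Y < Y ^ (d-1) * Y := by exact mul_lt_mul_of_pos_right hva hY0
        _ = Y ^ d := by rw [← pow_succ]; congr 1; omega
    refine ⟨hay, ?_⟩
    -- f.eval y = y^d + lower sum
    have heval : x + f.eval y = y ^ d + (x + ∑ i ∈ Finset.range d, f.coeff i * y ^ i) := by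
      rw [Polynomial.eval_eq_sum_range, hdeg, Finset.sum_range_succ]
      have : f.coeff d = 1 := by
        have := hmonic.coeff_natDegree; rwa [hdeg] at this
      rw [this, one_mul]; ring
    have hS : v (x + ∑ i ∈ Finset.range d, f.coeff i * y ^ i) < Y ^ d := by
      refine lt_of_le_of_lt (hna _ _) (max_lt hx ?_)
      refine na_sum_lt v hna hYd0 _ _ ?_
      intro i hi
      rw [Finset.mem_range] at hi
      rw [v.map_mul, v.map_pow]
      calc v (f.coeff i) * Y ^ i < Y ^ (d - i) * Y ^ i :=
            mul_lt_mul_of_pos_right (hb i hi) (pow_pos hY0 i)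
        _ = Y ^ d := by rw [← pow_add]; congr 1; omega
    rw [heval, na_add_eq v hna (by rwa [v.map_pow]), v.map_pow]
  constructor
  · intro P hP
    obtain ⟨hay, hfx⟩ := key P hP
    rw [hB] at hP ⊢
    obtain ⟨x, y⟩ := P
    simp only [Set.mem_setOf_eq, gt_iff_lt, max_lt_iff] at hP ⊢
    obtain ⟨hx', hCfy, ha'⟩ := hP
    set Y := v y with hY
    have hY1 : 1 < Y := lt_of_le_of_lt hCf1 hCfy
    have hY0 : 0 < Y := lt_trans zero_lt_one hY1
    have hYd0 : (0:ℝ) < Y ^ d := pow_pos hY0 d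
    have hYle : Y ≤ Y ^ d := le_self_pow₀ (le_of_lt hY1) (by omega)
    rw [hφ]
    simp only
    rw [hfx]
    refine ⟨?_, lt_of_lt_of_le hCfy hYle, lt_of_lt_of_le ha' hYle⟩
    -- (v (a*y)) ^ (1/d) < Y ^ d
    rw [one_div]
    rw [Real.rpow_inv_lt_iff_of_pos (v.nonneg _) (le_of_lt hYd0)
      (by positivity : (0:ℝ) < (d:ℝ)), Real.rpow_natCast]
    calc v (a * y) < Y ^ d := hay
      _ ≤ (Y ^ d) ^ d := le_self_pow₀ (one_le_pow₀ (le_of_lt hY1)) (by omega)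
  · intro P hP
    obtain ⟨hay, hfx⟩ := key P hP
    rw [hφ]
    simp only
    rw [hfx]
    exact max_eq_right (le_of_lt hay)
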